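/- arXiv:1611.08836 — 4 statements merged into one kernel-verified Lean document; each statement's English description precedes it below -/
import Mathlib

section
/- Let v_1, ..., v_k be unit vectors in ℝ^m (indexed cyclically) such that every m cyclically consecutive vectors are linearly independent, with k ≥ m. Define u_i to be a unit vector orthogonal to the m-1 vectors v_{i+1}, ..., v_{i+m-1}. If for each i the dot products u_i · v_i and u_i · v_{i+m} are nonzero, then every m cyclically consecutive vectors among the u_i are linearly independent. -/
open RealInnerProductSpace

/-- The dual of a generic spherical polygon is generic: if every `m` cyclically consecutive
vectors `v_i` are linearly independent, the `u_i` are unit vectors orthogonal to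
`v_{i+1}, …, v_{i+m-1}`, and `u_i · v_i ≠ 0`, `u_i · v_{i+m} ≠ 0`, then every `m`
cyclically consecutive vectors `u_i` are linearly independent. -/
theorem stmt_3 (m k : ℕ) (hm : 2 ≤ m) (hk : m ≤ k)
    (v u : ZMod k → EuclideanSpace ℝ (Fin m))
    (hv : ∀ i, ‖v i‖ = 1) (hu : ∀ i, ‖u i‖ = 1)
    (hvind : ∀ i : ZMod k, LinearIndependent ℝ (fun j : Fin m => v (i + (j : ℕ))))
    (horth : ∀ i : ZMod k, ∀ j : Fin (m - 1), ⟪u i, v (i + 1 + (j : ℕ))⟫ = 0)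
    (h1 : ∀ i : ZMod k, ⟪u i, v i⟫ ≠ 0)
    (h2 : ∀ i : ZMod k, ⟪u i, v (i + (m : ℕ))⟫ ≠ 0) :
    ∀ i : ZMod k, LinearIndependent ℝ (fun j : Fin m => u (i + (j : ℕ))) := by
  -- orthogonality for offsets 1 ≤ n ≤ m-1
  have key : ∀ (a : ZMod k) (n : ℕ), 1 ≤ n → n ≤ m - 1 → ⟪u a, v (a + (n : ℕ))⟫ = 0 := by
    intro a n h1n h2n
    have h := horth a ⟨n - 1, by omega⟩
    have hcast : a + 1 + ((n - 1 : ℕ) : ZMod k) = a + (n : ℕ) := by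
      have hn : ((n : ℕ) : ZMod k) = 1 + ((n - 1 : ℕ) : ZMod k) := by
        rw [← Nat.cast_one, ← Nat.cast_add]
        congr 1
        omega
      rw [hn]
      ring
    rwa [hcast] at h
  intro i
  rw [Fintype.linearIndependent_iff]
  intro g hg
  suffices H : ∀ N : ℕ, ∀ s : Fin m, (s : ℕ) < N → g s = 0 by
    intro s; exact H m s s.isLt
  intro N
  induction N with
  | zero => intro s hs; omega
  | succ N ih =>
    intro s hs
    rcases Nat.lt_or_ge (s : ℕ) N with h | h
    · exact ih s h
    have hsN : (s : ℕ) = N := by omega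
    -- pair with v (i + m + s)
    have h0 : ⟪(∑ j : Fin m, g j • u (i + (j : ℕ))), v (i + (m : ℕ) + ((s : ℕ) : ZMod k))⟫ = 0 := by
      rw [hg, inner_zero_left]
    rw [sum_inner] at h0
    simp_rw [real_inner_smul_left] at h0
    have hsplit : ∀ j : Fin m, j ≠ s →
        g j * ⟪u (i + (j : ℕ)), v (i + (m : ℕ) + ((s : ℕ) : ZMod k))⟫ = 0 := by
      intro j hj
      rcases Nat.lt_or_ge (j : ℕ) (s : ℕ) with hlt | hge
      · rw [ih j (by omega), zero_mul]
      · have hjs : (s : ℕ) < (j : ℕ) := by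
          rcases Nat.lt_or_ge (s : ℕ) (j : ℕ) with h' | h'
          · exact h'
          · exact absurd (Fin.ext (by omega)) hj
        have hidx : i + (m : ℕ) + ((s : ℕ) : ZMod k)
            = (i + (j : ℕ)) + ((m + (s : ℕ) - (j : ℕ) : ℕ) : ZMod k) := by
          have : ((j : ℕ) : ZMod k) + ((m + (s : ℕ) - (j : ℕ) : ℕ) : ZMod k)
              = ((m : ℕ) : ZMod k) + ((s : ℕ) : ZMod k) := by
            rw [← Nat.cast_add, ← Nat.cast_add]
            congr 1
            omega
          rw [add_assoc, add_assoc, ← this]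
        rw [hidx, key (i + (j : ℕ)) (m + (s : ℕ) - (j : ℕ)) (by omega)
          (by have := j.isLt; omega), mul_zero]
    rw [Finset.sum_eq_single s (fun j _ hj => hsplit j hj)
      (fun h => absurd (Finset.mem_univ s) h)] at h0
    have hne : ⟪u (i + ((s : ℕ) : ZMod k)), v (i + (m : ℕ) + ((s : ℕ) : ZMod k))⟫ ≠ 0 := by
      have := h2 (i + ((s : ℕ) : ZMod k))
      have hidx : (i + ((s : ℕ) : ZMod k)) + ((m : ℕ) : ZMod k)
          = i + (m : ℕ) + ((s : ℕ) : ZMod k) := by ring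
      rwa [hidx] at this
    exact (mul_eq_zero.mp h0).resolve_right hne
end

section
/- Let V be a finite-dimensional real vector space with symplectic form ω, and let L: V → V satisfy ω(Lx, y) = ω(x, Ly) for all x, y. Then the characteristic polynomial of L is the square of a polynomial; in particular, every eigenvalue of L has even algebraic multiplicity. -/
open Matrix LinearMap

set_option maxHeartbeats 1000000

/-- det of the Gram matrix of an alternating bilinear form is a square. -/
lemma isSquare_det_toMatrix_of_isAlt {K : Type*} [Field K] :
    ∀ (n : ℕ) {V : Type*} [AddCommGroup V] [Module K V]
      {ι : Type} [Fintype ι] [DecidableEq ι] (b : Module.Basis ι K V)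
      (B : LinearMap.BilinForm K V), B.IsAlt → Fintype.card ι = n →
      IsSquare ((LinearMap.BilinForm.toMatrix b B).det) := by
  intro n
  induction n using Nat.strong_induction_on with
  | _ n IH =>
  intro V _ _ ι _ _ b B hAlt hcard
  by_cases hdet : (LinearMap.BilinForm.toMatrix b B).det = 0
  · exact hdet ▸ ⟨0, (mul_zero 0).symm⟩
  have hndg : B.Nondegenerate :=
    (LinearMap.BilinForm.nondegenerate_iff_det_ne_zero b).mpr hdet
  rcases isEmpty_or_nonempty ι with hι | hι
  · have : (LinearMap.BilinForm.toMatrix b B).det = 1 := Matrix.det_isEmpty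
    exact this ▸ ⟨1, (one_mul 1).symm⟩
  haveI : FiniteDimensional K V := Module.Finite.of_basis b
  obtain ⟨i₀⟩ := hι
  set x := b i₀ with hx
  have hx0 : x ≠ 0 := b.ne_zero i₀
  have hy : ∃ y, B x y ≠ 0 := by
    by_contra h
    push_neg at h
    exact hx0 (hndg.1 x h)
  obtain ⟨y, hxy⟩ := hy
  have hy0 : y ≠ 0 := by rintro rfl; simp at hxy
  have hli : LinearIndependent K ![x, y] := by
    rw [LinearIndependent.pair_iff]
    intro s t hst
    have h1 : B (s • x + t • y) y = 0 := by rw [hst]; simp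
    simp only [map_add, LinearMap.map_smul, LinearMap.add_apply, LinearMap.smul_apply,
      smul_eq_mul, hAlt y, mul_zero, add_zero] at h1
    have hs : s = 0 := by
      rcases mul_eq_zero.mp h1 with h | h
      · exact h
      · exact absurd h hxy
    subst hs
    constructor
    · rfl
    · have : t • y = 0 := by simpa using hst
      rcases smul_eq_zero.mp this with h | h
      · exact h
      · exact absurd h hy0
  set W := Submodule.span K (Set.range ![x, y]) with hW
  let bW : Module.Basis (Fin 2) K W := Module.Basis.span hli
  have hbW : ∀ i, (bW i : V) = ![x, y] i := fun i => Module.Basis.coe_span_apply hli i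
  have entry : ∀ i j : Fin 2,
      (LinearMap.BilinForm.toMatrix bW (B.restrict W)) i j = B (![x, y] i) (![x, y] j) := by
    intro i j
    simp [LinearMap.BilinForm.toMatrix_apply, LinearMap.BilinForm.restrict_apply,
      LinearMap.domRestrict_apply, hbW]
  have hGram2 : (LinearMap.BilinForm.toMatrix bW (B.restrict W)).det = B x y * B x y := by
    rw [Matrix.det_fin_two, entry, entry, entry, entry]
    simp only [Matrix.cons_val_zero, Matrix.cons_val_one, Matrix.head_cons]
    have hyx : B y x = - B x y := (LinearMap.IsAlt.neg hAlt x y).symm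
    rw [hAlt x, hAlt y, hyx]
    ring
  have hWdet : (LinearMap.BilinForm.toMatrix bW (B.restrict W)).det ≠ 0 := by
    rw [hGram2]; exact mul_ne_zero hxy hxy
  have hWndg : (B.restrict W).Nondegenerate :=
    (LinearMap.BilinForm.nondegenerate_iff_det_ne_zero bW).mpr hWdet
  have hcompl : IsCompl W (B.orthogonal W) :=
    B.isCompl_orthogonal_of_restrict_nondegenerate hAlt.isRefl hWndg
  set O := B.orthogonal W with hO
  set m := Module.finrank K O with hm
  let bO : Module.Basis (Fin m) K O := Module.finBasis K O
  let e : (W × O) ≃ₗ[K] V := Submodule.prodEquivOfIsCompl W O hcompl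
  let bV : Module.Basis (Fin 2 ⊕ Fin m) K V := (bW.prod bO).map e
  have hbVl : ∀ i, bV (Sum.inl i) = (bW i : V) := by
    intro i
    simp [bV, e, Module.Basis.prod_apply, Submodule.coe_prodEquivOfIsCompl']
  have hbVr : ∀ j, bV (Sum.inr j) = (bO j : V) := by
    intro j
    simp [bV, e, Module.Basis.prod_apply, Submodule.coe_prodEquivOfIsCompl']
  have hblock : LinearMap.BilinForm.toMatrix bV B =
      Matrix.fromBlocks (LinearMap.BilinForm.toMatrix bW (B.restrict W)) 0 0
        (LinearMap.BilinForm.toMatrix bO (B.restrict O)) := by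
    have horth : ∀ (i : Fin 2) (j : Fin m), B ((bW i : V)) ((bO j : V)) = 0 := by
      intro i j
      have hmem := (bO j).2
      rw [LinearMap.BilinForm.mem_orthogonal_iff] at hmem
      exact hmem _ (bW i).2
    ext i j
    rcases i with i | i <;> rcases j with j | j
    · simp [LinearMap.BilinForm.toMatrix_apply, LinearMap.BilinForm.restrict_apply,
        LinearMap.domRestrict_apply, hbVl]
    · simp [LinearMap.BilinForm.toMatrix_apply, hbVl, hbVr, horth i j]
    · simp [LinearMap.BilinForm.toMatrix_apply, hbVl, hbVr, hAlt.isRefl _ _ (horth j i)]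
    · simp [LinearMap.BilinForm.toMatrix_apply, LinearMap.BilinForm.restrict_apply,
        LinearMap.domRestrict_apply, hbVr]
  have hfr : Module.finrank K V = n := by
    rw [Module.finrank_eq_card_basis b, hcard]
  have hfrW : Module.finrank K W = 2 := by
    rw [hW, finrank_span_eq_card hli, Fintype.card_fin]
  have hmn : 2 + m = n := by
    rw [← hfr, ← hfrW, hm]
    exact Submodule.finrank_add_eq_of_isCompl hcompl
  have hm_lt : m < n := by omega
  have hOalt : (B.restrict O).IsAlt := fun z => hAlt z
  have hsqO : IsSquare ((LinearMap.BilinForm.toMatrix bO (B.restrict O)).det) :=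
    IH m hm_lt (ι := Fin m) bO (B.restrict O) hOalt (Fintype.card_fin m)
  have hsqV : IsSquare ((LinearMap.BilinForm.toMatrix bV B).det) := by
    rw [hblock, Matrix.det_fromBlocks_zero₂₁, hGram2]
    obtain ⟨r, hr⟩ := hsqO
    exact ⟨B x y * r, by rw [hr]; ring⟩
  have hcard2 : Fintype.card (Fin 2 ⊕ Fin m) = Fintype.card ι := by
    simp [hcard, ← hmn]
  let ε : (Fin 2 ⊕ Fin m) ≃ ι := Fintype.equivOfCardEq hcard2
  let bV' : Module.Basis ι K V := bV.reindex ε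
  have hsub : LinearMap.BilinForm.toMatrix bV' B
      = (LinearMap.BilinForm.toMatrix bV B).submatrix ε.symm ε.symm := by
    ext i j
    simp [LinearMap.BilinForm.toMatrix_apply, Module.Basis.reindex_apply, Matrix.submatrix_apply, bV']
  have hsqV' : IsSquare ((LinearMap.BilinForm.toMatrix bV' B).det) := by
    rw [hsub, Matrix.det_submatrix_equiv_self]
    exact hsqV
  have hchange : (bV'.toMatrix b)ᵀ * LinearMap.BilinForm.toMatrix bV' B * bV'.toMatrix b
      = LinearMap.BilinForm.toMatrix b B := LinearMap.BilinForm.toMatrix_mul_basis_toMatrix bV' b B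
  rw [← hchange, Matrix.det_mul, Matrix.det_mul, Matrix.det_transpose]
  obtain ⟨r, hr⟩ := hsqV'
  exact ⟨(bV'.toMatrix b).det * r, by rw [hr]; ring⟩

private lemma map_matmul {α β : Type*} [CommRing α] [CommRing β] {n : ℕ}
    (f : α →+* β) (M N : Matrix (Fin n) (Fin n) α) :
    (M * N).map f = M.map f * N.map f := by
  have h := _root_.map_mul (f.mapMatrix (m := Fin n)) M N
  simp only [RingHom.mapMatrix_apply] at h; exact h

set_option maxHeartbeats 1000000 in
/-- The characteristic polynomial of a skew-Hamiltonian linear map is the square of a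
polynomial; in particular every eigenvalue has even algebraic multiplicity. -/
theorem stmt_9 (V : Type*) [AddCommGroup V] [Module ℝ V] [FiniteDimensional ℝ V]
    (ω : V →ₗ[ℝ] V →ₗ[ℝ] ℝ) (halt : ∀ x, ω x x = 0)
    (hnd : ∀ x, (∀ y, ω x y = 0) → x = 0)
    (L : V →ₗ[ℝ] V) (hL : ∀ x y, ω (L x) y = ω x (L y)) :
    ∃ p : Polynomial ℝ, LinearMap.charpoly L = p ^ 2 ∧
      ∀ μ : ℝ, Even (Polynomial.rootMultiplicity μ (LinearMap.charpoly L)) := by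
  classical
  set n := Module.finrank ℝ V with hn
  let b : Module.Basis (Fin n) ℝ V := Module.finBasis ℝ V
  set G := LinearMap.BilinForm.toMatrix b ω with hG
  set A := LinearMap.toMatrix b b L with hadef
  have hAlt : LinearMap.IsAlt ω := halt
  have hndg : LinearMap.BilinForm.Nondegenerate ω := .ofSeparatingLeft hnd
  have hGdet : G.det ≠ 0 :=
    (LinearMap.BilinForm.nondegenerate_iff_det_ne_zero b).mp hndg
  -- G is skew-symmetric
  have hGskew : Gᵀ = -G := by
    ext i j
    have := LinearMap.IsAlt.neg hAlt (b i) (b j)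
    simp only [Matrix.transpose_apply, Matrix.neg_apply, hG, LinearMap.BilinForm.toMatrix_apply]
    exact this.symm
  -- det G is a nonzero square
  obtain ⟨t, ht⟩ : IsSquare G.det :=
    isSquare_det_toMatrix_of_isAlt n b ω hAlt (Fintype.card_fin n)
  have ht0 : t ≠ 0 := by
    intro h; rw [h, mul_zero] at ht; exact hGdet ht
  -- skew-Hamiltonian identity on matrices
  have hGA : Aᵀ * G = G * A := by
    have hcomp : LinearMap.BilinForm.compLeft ω L = LinearMap.BilinForm.compRight ω L := by
      ext x y
      exact hL x y
    calc Aᵀ * G = LinearMap.BilinForm.toMatrix b (LinearMap.BilinForm.compLeft ω L) :=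
          (LinearMap.BilinForm.toMatrix_compLeft b ω L).symm
      _ = LinearMap.BilinForm.toMatrix b (LinearMap.BilinForm.compRight ω L) := by rw [hcomp]
      _ = G * A := LinearMap.BilinForm.toMatrix_compRight b ω L
  -- the polynomial matrix
  set Cm : ℝ →+* Polynomial ℝ := Polynomial.C with hCm
  set M : Matrix (Fin n) (Fin n) (Polynomial ℝ) := G.map Cm * Matrix.charmatrix A with hM
  have hdetM : M.det = Cm G.det * A.charpoly := by
    have h1 : (G.map Cm).det = Cm G.det := by
      rw [RingHom.map_det, RingHom.mapMatrix_apply]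
    rw [hM, Matrix.det_mul, h1, Matrix.charpoly]
  -- M is skew-symmetric
  have hmapT : (G.map Cm)ᵀ = -(G.map Cm) := by
    rw [← Matrix.transpose_map, hGskew]
    ext i j; simp
  have hAT : (A.map Cm)ᵀ = Aᵀ.map Cm := Matrix.transpose_map
  have hcm : Matrix.charmatrix A = Matrix.scalar (Fin n) Polynomial.X - A.map Cm := rfl
  have hcharT : (Matrix.charmatrix A)ᵀ
      = Matrix.scalar (Fin n) Polynomial.X - Aᵀ.map Cm := by
    rw [hcm, Matrix.transpose_sub, hAT, Matrix.scalar_apply, Matrix.diagonal_transpose]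
  have hscal : ∀ N : Matrix (Fin n) (Fin n) (Polynomial ℝ),
      Matrix.scalar (Fin n) Polynomial.X * N = N * Matrix.scalar (Fin n) Polynomial.X :=
    fun N => (Matrix.scalar_commute Polynomial.X (fun r' => Commute.all _ _) N).eq
  have hMskew : Mᵀ = -M := by
    calc Mᵀ = (Matrix.charmatrix A)ᵀ * (G.map Cm)ᵀ := Matrix.transpose_mul _ _
      _ = (Matrix.scalar (Fin n) Polynomial.X - Aᵀ.map Cm) * (-(G.map Cm)) := by
          rw [hcharT, hmapT]
      _ = -((Matrix.scalar (Fin n) Polynomial.X - Aᵀ.map Cm) * (G.map Cm)) := by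
          rw [mul_neg]
      _ = -(Matrix.scalar (Fin n) Polynomial.X * (G.map Cm) - (Aᵀ * G).map Cm) := by
          rw [sub_mul, map_matmul]
      _ = -((G.map Cm) * Matrix.scalar (Fin n) Polynomial.X - (G * A).map Cm) := by
          rw [hGA, hscal]
      _ = -M := by rw [hM, hcm, mul_sub, map_matmul]
  -- move to the fraction field
  set K := FractionRing (Polynomial ℝ) with hK
  set φ : Polynomial ℝ →+* K := algebraMap (Polynomial ℝ) K with hφ
  have hφinj : Function.Injective φ := IsFractionRing.injective (Polynomial ℝ) K
  haveI : CharZero K := charZero_of_injective_algebraMap hφinj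
  set M' : Matrix (Fin n) (Fin n) K := M.map φ with hM'
  have hM'skew : M'ᵀ = -M' := by
    rw [hM', ← Matrix.transpose_map, hMskew]
    ext i j; simp
  have hskew_entry : ∀ i j, M' j i = - M' i j := by
    intro i j
    have := congrFun (congrFun hM'skew i) j
    simpa [Matrix.transpose_apply, Matrix.neg_apply] using this
  -- the bilinear form over K given by M' is alternating
  have hBalt : (Matrix.toBilin' M').IsAlt := by
    intro v
    have h1 : Matrix.toBilin' M' v v = ∑ i, ∑ j, v i * M' i j * v j :=
      Matrix.toBilin'_apply _ _ _
    have h2 : (∑ i, ∑ j, v i * M' i j * v j)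
        = - ∑ i, ∑ j, v i * M' i j * v j := by
      calc (∑ i, ∑ j, v i * M' i j * v j)
          = ∑ j, ∑ i, v i * M' i j * v j := Finset.sum_comm
        _ = ∑ i, ∑ j, v j * M' j i * v i := rfl
        _ = ∑ i, ∑ j, -(v i * M' i j * v j) := by
            refine Finset.sum_congr rfl fun i _ => Finset.sum_congr rfl fun j _ => ?_
            rw [hskew_entry i j]; ring
        _ = - ∑ i, ∑ j, v i * M' i j * v j := by
            simp [Finset.sum_neg_distrib]
    have h3 : Matrix.toBilin' M' v v = - Matrix.toBilin' M' v v := by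
      rw [h1]; exact h2
    exact CharZero.eq_neg_self_iff.mp h3
  -- det M' is a square in K
  have hsqM' : IsSquare M'.det := by
    have h := isSquare_det_toMatrix_of_isAlt n (Pi.basisFun K (Fin n))
      (Matrix.toBilin' M') hBalt (Fintype.card_fin n)
    rwa [LinearMap.BilinForm.toMatrix_basisFun, BilinForm.toMatrix'_toBilin'] at h
  obtain ⟨s, hs⟩ := hsqM'
  have hdetM' : M'.det = φ M.det := (RingHom.map_det φ M).symm
  -- assemble: φ (charpoly) = (s / φ (C t))^2
  set c : K := φ (Cm t) with hc
  have hc0 : c ≠ 0 := by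
    intro h
    apply ht0
    have : Cm t = 0 := hφinj (by simpa using h)
    exact Polynomial.C_eq_zero.mp this
  have hkey : s * s = c * c * φ A.charpoly := by
    rw [← hs, hdetM', hdetM, ht, hc]
    rw [_root_.map_mul Cm t t, _root_.map_mul φ, _root_.map_mul φ]
  set q : K := s / c with hq
  have hq2 : q * q = φ A.charpoly := by
    rw [hq, div_mul_div_comm, hkey]
    exact mul_div_cancel_left₀ _ (mul_ne_zero hc0 hc0)
  -- q is integral over ℝ[X], hence a polynomial
  have hint : IsIntegral (Polynomial ℝ) q := by
    refine ⟨Polynomial.X ^ 2 - Polynomial.C A.charpoly,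
      Polynomial.monic_X_pow_sub_C _ two_ne_zero, ?_⟩
    simp only [Polynomial.eval₂_sub, Polynomial.eval₂_pow, Polynomial.eval₂_X,
      Polynomial.eval₂_C]
    rw [sq, hq2]
    exact sub_self _
  obtain ⟨p, hp⟩ := IsIntegrallyClosed.isIntegral_iff.mp hint
  have hp2 : p ^ 2 = A.charpoly := by
    apply hφinj
    rw [map_pow, show φ p = q from hp, sq, hq2]
  have hcharL : LinearMap.charpoly L = A.charpoly :=
    (LinearMap.charpoly_toMatrix L b).symm
  have hfinal : LinearMap.charpoly L = p ^ 2 := by rw [hcharL, hp2]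
  refine ⟨p, hfinal, fun μ => ?_⟩
  have hp0 : p ≠ 0 := by
    intro h
    have : LinearMap.charpoly L = 0 := by rw [hfinal, h]; ring
    exact (LinearMap.charpoly_monic L).ne_zero this
  rw [hfinal, sq, Polynomial.rootMultiplicity_mul (mul_ne_zero hp0 hp0)]
  exact ⟨_, rfl⟩
end

section
/- Let ρ: ℝ → ℝ be a continuous 2πr-periodic function (0 < r < 1) such that ∫₀^{2πr} ρ(t) cos(t/r) dt = ∫₀^{2πr} ρ(t) sin(t/r) dt = ∫₀^{2πr} ρ(t) dt = 0, and ρ not identically zero. Then ρ has at least four zeros in [0, 2πr). -/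
open Real

lemma trig_id (x A B : ℝ) :
    sin (x - A) * sin (x - B) =
      (cos A * cos B + sin A * sin B) / 2
      - (cos A * cos B - sin A * sin B) / 2 * (cos x ^ 2 - sin x ^ 2)
      - (sin A * cos B + cos A * sin B) * (sin x * cos x) := by
  rw [sin_sub, sin_sub]
  linear_combination ((cos A * cos B + sin A * sin B) / 2) * sin_sq_add_cos_sq x

lemma gdecomp (r : ℝ) (hr : 0 < r) (A B t : ℝ) :
    sin ((t - A) / (2 * r)) * sin ((t - B) / (2 * r)) =
      (cos (A / (2 * r)) * cos (B / (2 * r)) + sin (A / (2 * r)) * sin (B / (2 * r))) / 2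
      + (-((cos (A / (2 * r)) * cos (B / (2 * r)) - sin (A / (2 * r)) * sin (B / (2 * r))) / 2))
          * cos (t / r)
      + (-((sin (A / (2 * r)) * cos (B / (2 * r)) + cos (A / (2 * r)) * sin (B / (2 * r))) / 2))
          * sin (t / r) := by
  have ht : t / r = 2 * (t / (2 * r)) := by field_simp
  have hA : (t - A) / (2 * r) = t / (2 * r) - A / (2 * r) := by ring
  have hB : (t - B) / (2 * r) = t / (2 * r) - B / (2 * r) := by ring
  rw [hA, hB, ht, cos_two_mul', sin_two_mul, trig_id]
  ring

lemma pos_point_integral (f : ℝ → ℝ) (hf : Continuous f) {a b x₀ : ℝ}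
    (hx₀ : x₀ ∈ Set.Ioo a b) (hfx₀ : 0 < f x₀)
    (hnonneg : ∀ t ∈ Set.Icc a b, 0 ≤ f t) :
    0 < ∫ t in a..b, f t := by
  obtain ⟨hax, hxb⟩ := hx₀
  have hev : ∀ᶠ y in nhds x₀, 0 < f y :=
    (hf.continuousAt (x := x₀)).eventually_const_lt hfx₀
  obtain ⟨δ, hδ, hball⟩ := Metric.eventually_nhds_iff.mp hev
  set u := max a (x₀ - δ / 2) with hu
  set v := min b (x₀ + δ / 2) with hv
  have hau : a ≤ u := le_max_left _ _
  have hvb : v ≤ b := min_le_left _ _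
  have hux : u < x₀ := max_lt hax (by linarith)
  have hxv : x₀ < v := lt_min hxb (by linarith)
  have huv : u < v := hux.trans hxv
  have hposon : ∀ y ∈ Set.Ioo u v, 0 < f y := by
    intro y hy
    apply hball
    rw [Real.dist_eq, abs_lt]
    constructor
    · have h1 := hy.1; have h2 := le_max_right a (x₀ - δ / 2); rw [hu] at h1; linarith
    · have h1 := hy.2; have h2 := min_le_right b (x₀ + δ / 2); rw [hv] at h1; linarith
  have hi1 : IntervalIntegrable f MeasureTheory.volume a u := hf.intervalIntegrable _ _
  have hi2 : IntervalIntegrable f MeasureTheory.volume u v := hf.intervalIntegrable _ _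
  have hi3 : IntervalIntegrable f MeasureTheory.volume v b := hf.intervalIntegrable _ _
  have hsplit : (∫ t in a..u, f t) + (∫ t in u..v, f t) + (∫ t in v..b, f t) = ∫ t in a..b, f t := by
    rw [intervalIntegral.integral_add_adjacent_intervals hi1 hi2,
      intervalIntegral.integral_add_adjacent_intervals (hi1.trans hi2) hi3]
  have h1 : 0 ≤ ∫ t in a..u, f t :=
    intervalIntegral.integral_nonneg hau (fun t ht => hnonneg t ⟨ht.1, ht.2.trans (huv.le.trans hvb)⟩)
  have h2 : 0 < ∫ t in u..v, f t :=
    intervalIntegral.intervalIntegral_pos_of_pos_on hi2 hposon huv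
  have h3 : 0 ≤ ∫ t in v..b, f t :=
    intervalIntegral.integral_nonneg hvb (fun t ht => hnonneg t ⟨(hau.trans huv.le).trans ht.1, ht.2⟩)
  linarith

lemma engine (r : ℝ) (hr : 0 < r) (ρ : ℝ → ℝ) (hcont : Continuous ρ)
    (hper : Function.Periodic ρ (2 * π * r))
    (h0 : ∫ t in (0:ℝ)..(2 * π * r), ρ t = 0)
    (hc : ∫ t in (0:ℝ)..(2 * π * r), ρ t * cos (t / r) = 0)
    (hs : ∫ t in (0:ℝ)..(2 * π * r), ρ t * sin (t / r) = 0)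
    {A B x₀ : ℝ} (hAB : A < B) (hBT : B < A + 2 * π * r)
    (hpos : ∀ t ∈ Set.Icc A B, 0 ≤ ρ t)
    (hneg : ∀ t ∈ Set.Icc B (A + 2 * π * r), ρ t ≤ 0)
    (hx₀ : x₀ ∈ Set.Ioo A (A + 2 * π * r)) (hx0ne : ρ x₀ ≠ 0) : False := by
  have hr2 : (0:ℝ) < 2 * r := by linarith
  have hT : 0 < 2 * π * r := by positivity
  have hρA : ρ A = 0 := by
    have h1 : 0 ≤ ρ A := hpos A ⟨le_refl _, hAB.le⟩
    have h2 : ρ (A + 2 * π * r) ≤ 0 := hneg _ ⟨hBT.le, le_refl _⟩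
    rw [hper A] at h2
    linarith
  have hρB : ρ B = 0 := by
    have h1 := hpos B ⟨hAB.le, le_refl _⟩
    have h2 := hneg B ⟨le_refl _, hBT.le⟩
    linarith
  set g : ℝ → ℝ := fun t => sin ((t - A) / (2 * r)) * sin ((t - B) / (2 * r)) with hg
  have gcont : Continuous g := by fun_prop
  have gper : Function.Periodic g (2 * π * r) := by
    intro t
    have e1 : (t + 2 * π * r - A) / (2 * r) = (t - A) / (2 * r) + π := by
      field_simp; ring
    have e2 : (t + 2 * π * r - B) / (2 * r) = (t - B) / (2 * r) + π := by
      field_simp; ring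
    simp only [hg, e1, e2, sin_add_pi]
    ring
  have fper : Function.Periodic (fun t => ρ t * g t) (2 * π * r) := hper.mul gper
  have hint : (∫ t in A..(A + 2 * π * r), ρ t * g t) = 0 := by
    rw [fper.intervalIntegral_add_eq A 0, zero_add]
    set c0 := (cos (A / (2 * r)) * cos (B / (2 * r)) + sin (A / (2 * r)) * sin (B / (2 * r))) / 2
    set c1 := -((cos (A / (2 * r)) * cos (B / (2 * r)) - sin (A / (2 * r)) * sin (B / (2 * r))) / 2)
    set c2 := -((sin (A / (2 * r)) * cos (B / (2 * r)) + cos (A / (2 * r)) * sin (B / (2 * r))) / 2)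
    have heq : ∀ t : ℝ, ρ t * g t
        = c0 * ρ t + (c1 * (ρ t * cos (t / r)) + c2 * (ρ t * sin (t / r))) := by
      intro t
      simp only [hg]
      rw [gdecomp r hr A B t]
      ring
    rw [intervalIntegral.integral_congr (fun t _ => heq t)]
    rw [intervalIntegral.integral_add, intervalIntegral.integral_add,
      intervalIntegral.integral_const_mul, intervalIntegral.integral_const_mul,
      intervalIntegral.integral_const_mul, h0, hc, hs]
    · ring
    · exact (by fun_prop : Continuous fun t => c1 * (ρ t * cos (t / r))).intervalIntegrable _ _
    · exact (by fun_prop : Continuous fun t => c2 * (ρ t * sin (t / r))).intervalIntegrable _ _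
    · exact (by fun_prop : Continuous fun t => c0 * ρ t).intervalIntegrable _ _
    · exact (by fun_prop : Continuous fun t =>
        c1 * (ρ t * cos (t / r)) + c2 * (ρ t * sin (t / r))).intervalIntegrable _ _
  have gneg : ∀ t ∈ Set.Ioo A B, g t < 0 := by
    rintro t ⟨h1, h2⟩
    have s1 : 0 < sin ((t - A) / (2 * r)) := by
      apply sin_pos_of_pos_of_lt_pi
      · have : 0 < t - A := by linarith
        positivity
      · rw [div_lt_iff₀ hr2]; nlinarith
    have s2 : sin ((t - B) / (2 * r)) < 0 := by
      have e : (t - B) / (2 * r) = -((B - t) / (2 * r)) := by ring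
      rw [e, sin_neg, neg_neg_iff_pos]
      apply sin_pos_of_pos_of_lt_pi
      · have : 0 < B - t := by linarith
        positivity
      · rw [div_lt_iff₀ hr2]; nlinarith
    exact mul_neg_of_pos_of_neg s1 s2
  have gpos : ∀ t ∈ Set.Ioo B (A + 2 * π * r), 0 < g t := by
    rintro t ⟨h1, h2⟩
    have s1 : 0 < sin ((t - A) / (2 * r)) := by
      apply sin_pos_of_pos_of_lt_pi
      · have : 0 < t - A := by linarith
        positivity
      · rw [div_lt_iff₀ hr2]; nlinarith
    have s2 : 0 < sin ((t - B) / (2 * r)) := by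
      apply sin_pos_of_pos_of_lt_pi
      · have : 0 < t - B := by linarith
        positivity
      · rw [div_lt_iff₀ hr2]; nlinarith
    exact mul_pos s1 s2
  set f : ℝ → ℝ := fun t => -(ρ t * g t) with hf
  have fcont : Continuous f := (hcont.mul gcont).neg
  have fnonneg : ∀ t ∈ Set.Icc A (A + 2 * π * r), 0 ≤ f t := by
    rintro t ⟨h1, h2⟩
    rcases eq_or_lt_of_le h1 with rfl | h1'
    · simp [hf, hρA]
    rcases lt_trichotomy t B with hb | rfl | hb
    · have hg1 := gneg t ⟨h1', hb⟩
      have hp1 := hpos t ⟨h1, hb.le⟩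
      simp only [hf, neg_nonneg]
      exact mul_nonpos_of_nonneg_of_nonpos hp1 hg1.le
    · simp [hf, hρB]
    rcases eq_or_lt_of_le h2 with rfl | h2'
    · simp [hf, hper A, hρA]
    · have hg1 := gpos t ⟨hb, h2'⟩
      have hp1 := hneg t ⟨hb.le, h2⟩
      simp only [hf, neg_nonneg]
      exact mul_nonpos_of_nonpos_of_nonneg hp1 hg1.le
  have fx₀ : 0 < f x₀ := by
    rcases lt_trichotomy x₀ B with hb | rfl | hb
    · have hg1 := gneg x₀ ⟨hx₀.1, hb⟩
      have hp1 : 0 < ρ x₀ := lt_of_le_of_ne (hpos x₀ ⟨hx₀.1.le, hb.le⟩) (Ne.symm hx0ne)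
      simp only [hf, neg_pos]
      exact mul_neg_of_pos_of_neg hp1 hg1
    · exact absurd hρB hx0ne
    · have hg1 := gpos x₀ ⟨hb, hx₀.2⟩
      have hp1 : ρ x₀ < 0 := lt_of_le_of_ne (hneg x₀ ⟨hb.le, hx₀.2.le⟩) hx0ne
      simp only [hf, neg_pos]
      exact mul_neg_of_neg_of_pos hp1 hg1
  have hpos' := pos_point_integral f fcont hx₀ fx₀ fnonneg
  rw [hf] at hpos'
  rw [intervalIntegral.integral_neg, hint] at hpos'
  simp at hpos'

lemma exists_zero {f : ℝ → ℝ} (hf : Continuous f) {u v : ℝ} (h1 : f u ≤ 0) (h2 : 0 ≤ f v) :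
    ∃ w ∈ Set.uIcc u v, f w = 0 := by
  have h0 : (0 : ℝ) ∈ Set.uIcc (f u) (f v) := Set.mem_uIcc.2 (Or.inl ⟨h1, h2⟩)
  obtain ⟨w, hw, hw0⟩ := intermediate_value_uIcc hf.continuousOn h0
  exact ⟨w, hw, hw0⟩

lemma pos_on_of_nz {f : ℝ → ℝ} (hf : Continuous f) {u v q : ℝ} (hq : q ∈ Set.Ioo u v)
    (hfq : 0 < f q) (hnz : ∀ t ∈ Set.Ioo u v, f t ≠ 0) :
    ∀ t ∈ Set.Ioo u v, 0 < f t := by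
  intro t ht
  rcases lt_trichotomy (f t) 0 with h | h | h
  · obtain ⟨w, hw, hw0⟩ := exists_zero hf h.le hfq.le
    have : w ∈ Set.Ioo u v := Set.ordConnected_Ioo.uIcc_subset ht hq hw
    exact absurd hw0 (hnz w this)
  · exact absurd h (hnz t ht)
  · exact h

lemma key (r : ℝ) (hr : 0 < r) (ρ : ℝ → ℝ) (hcont : Continuous ρ)
    (hper : Function.Periodic ρ (2 * π * r))
    (h0 : ∫ t in (0:ℝ)..(2 * π * r), ρ t = 0)
    (hc : ∫ t in (0:ℝ)..(2 * π * r), ρ t * cos (t / r) = 0)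
    (hs : ∫ t in (0:ℝ)..(2 * π * r), ρ t * sin (t / r) = 0)
    (p : ℝ) (hp : 0 < ρ p)
    (hnot : ∀ z1 z2 z3 z4 : ℝ, z1 < z2 → z2 < z3 → z3 < z4 → z4 < z1 + 2 * π * r →
      ρ z1 = 0 → ρ z2 = 0 → ρ z3 = 0 → ρ z4 = 0 → False) : False := by
  have hπr : 0 < π * r := by positivity
  have hT : 0 < 2 * π * r := by positivity
  -- a negative point exists
  have hneg_ex : ∃ m, ρ m < 0 := by
    by_contra hno
    push_neg at hno
    have hshift : (∫ t in (p - π * r)..((p - π * r) + 2 * π * r), ρ t) = 0 := by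
      rw [hper.intervalIntegral_add_eq (p - π * r) 0, zero_add]; exact h0
    have hposint := pos_point_integral ρ hcont (a := p - π * r)
      (b := (p - π * r) + 2 * π * r) (x₀ := p) ⟨by linarith, by linarith⟩ hp
      (fun t _ => hno t)
    linarith
  obtain ⟨m, hm⟩ := hneg_ex
  obtain ⟨n, hn, -⟩ := existsUnique_add_zsmul_mem_Ico hT m p
  set m' := m + n • (2 * π * r) with hm'def
  have hρm' : ρ m' < 0 := by rw [hm'def, hper.zsmul n m]; exact hm
  have hpm' : p < m' := lt_of_le_of_ne hn.1 (fun e => by rw [← e] at hρm'; linarith)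
  have hm'T : m' < p + 2 * π * r := hn.2
  -- z2 : first zero to the right of p
  set S₂ := Set.Icc p (p + 2 * π * r) ∩ ρ ⁻¹' {0} with hS₂def
  have hS₂c : IsClosed S₂ := isClosed_Icc.inter (isClosed_singleton.preimage hcont)
  obtain ⟨w, hw, hw0⟩ := exists_zero hcont hρm'.le hp.le
  have hwI : w ∈ Set.Icc p m' := by rwa [Set.uIcc_of_ge hpm'.le] at hw
  have hS₂ne : S₂.Nonempty := ⟨w, ⟨hwI.1, hwI.2.trans hm'T.le⟩, hw0⟩
  have hS₂bdd : BddBelow S₂ := ⟨p, fun x hx => hx.1.1⟩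
  set z2 := sInf S₂ with hz2def
  have hz2 : z2 ∈ S₂ := hS₂c.csInf_mem hS₂ne hS₂bdd
  have hz2_min : ∀ t ∈ S₂, z2 ≤ t := fun t ht => csInf_le hS₂bdd ht
  have hρz2 : ρ z2 = 0 := hz2.2
  have hpz2 : p < z2 := lt_of_le_of_ne hz2.1.1 (fun e => by rw [← e] at hρz2; linarith)
  have hz2T : z2 ≤ p + 2 * π * r := hz2.1.2
  -- z1 : last zero to the left of p
  set S₁ := Set.Icc (p - 2 * π * r) p ∩ ρ ⁻¹' {0} with hS₁def
  have hS₁c : IsClosed S₁ := isClosed_Icc.inter (isClosed_singleton.preimage hcont)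
  have hρm'' : ρ (m' - 2 * π * r) < 0 := by rw [hper.sub_eq]; exact hρm'
  obtain ⟨w1, hw1, hw10⟩ := exists_zero hcont hρm''.le hp.le
  have hw1I : w1 ∈ Set.Icc (m' - 2 * π * r) p := by
    rwa [Set.uIcc_of_le (by linarith)] at hw1
  have hS₁ne : S₁.Nonempty := ⟨w1, ⟨by linarith [hw1I.1], hw1I.2⟩, hw10⟩
  have hS₁bdd : BddAbove S₁ := ⟨p, fun x hx => hx.1.2⟩
  set z1 := sSup S₁ with hz1def
  have hz1 : z1 ∈ S₁ := hS₁c.csSup_mem hS₁ne hS₁bdd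
  have hz1_max : ∀ t ∈ S₁, t ≤ z1 := fun t ht => le_csSup hS₁bdd ht
  have hρz1 : ρ z1 = 0 := hz1.2
  have hz1p : z1 < p := lt_of_le_of_ne hz1.1.2 (fun e => by rw [e] at hρz1; linarith)
  have hz1pT : p - 2 * π * r ≤ z1 := hz1.1.1
  have hρz1T : ρ (z1 + 2 * π * r) = 0 := (hper z1).trans hρz1
  -- no zeros strictly between z1 and z2
  have hnz12 : ∀ t ∈ Set.Ioo z1 z2, ρ t ≠ 0 := by
    rintro t ⟨h1, h2⟩ ht0
    rcases le_or_gt t p with h | h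
    · have htS : t ∈ S₁ := ⟨⟨by linarith, h⟩, ht0⟩
      exact absurd (hz1_max t htS) (not_le.2 h1)
    · have htS : t ∈ S₂ := ⟨⟨h.le, by linarith⟩, ht0⟩
      exact absurd (hz2_min t htS) (not_le.2 h2)
  have hpIoo : p ∈ Set.Ioo z1 z2 := ⟨hz1p, hpz2⟩
  have hpos12 : ∀ t ∈ Set.Ioo z1 z2, 0 < ρ t := pos_on_of_nz hcont hpIoo hp hnz12
  have hnn12 : ∀ t ∈ Set.Icc z1 z2, 0 ≤ ρ t := by
    rintro t ⟨h1, h2⟩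
    by_contra hcon
    push_neg at hcon
    have h1' : z1 < t := lt_of_le_of_ne h1 (fun e => by rw [← e, hρz1] at hcon; linarith)
    have h2' : t < z2 := lt_of_le_of_ne h2 (fun e => by rw [e, hρz2] at hcon; linarith)
    exact absurd (hpos12 t ⟨h1', h2'⟩) (not_lt.2 hcon.le)
  have hz1z2 : z1 < z2 := hz1p.trans hpz2
  -- z2 < z1 + period
  have hz12T : z2 < z1 + 2 * π * r := by
    by_contra hcon
    push_neg at hcon
    rcases eq_or_lt_of_le hcon with heq | hlt
    · have hshift : (∫ t in z1..(z1 + 2 * π * r), ρ t) = 0 := by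
        rw [hper.intervalIntegral_add_eq z1 0, zero_add]; exact h0
      have hposint := pos_point_integral ρ hcont (a := z1) (b := z1 + 2 * π * r)
        (x₀ := p) ⟨hz1p, by linarith⟩ hp
        (fun t ht => hnn12 t ⟨ht.1, by rw [← heq]; exact ht.2⟩)
      linarith
    · exact hnz12 (z1 + 2 * π * r) ⟨by linarith, hlt⟩ hρz1T
  -- integral over [z2, z1+T] is negative
  have hI12 : 0 < ∫ t in z1..z2, ρ t := pos_point_integral ρ hcont hpIoo hp hnn12
  have hshiftz1 : (∫ t in z1..(z1 + 2 * π * r), ρ t) = 0 := by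
    rw [hper.intervalIntegral_add_eq z1 0, zero_add]; exact h0
  have hsplit : (∫ t in z1..z2, ρ t) + (∫ t in z2..(z1 + 2 * π * r), ρ t)
      = ∫ t in z1..(z1 + 2 * π * r), ρ t :=
    intervalIntegral.integral_add_adjacent_intervals
      (hcont.intervalIntegrable _ _) (hcont.intervalIntegrable _ _)
  have hIneg : (∫ t in z2..(z1 + 2 * π * r), ρ t) < 0 := by linarith
  -- negative point m₂ in (z2, z1+T)
  have hm2ex : ∃ t ∈ Set.Icc z2 (z1 + 2 * π * r), ρ t < 0 := by
    by_contra hcon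
    push_neg at hcon
    have hnn : (0:ℝ) ≤ ∫ t in z2..(z1 + 2 * π * r), ρ t :=
      intervalIntegral.integral_nonneg (by linarith : z2 ≤ z1 + 2 * π * r)
        (fun t ht => hcon t ht)
    linarith
  obtain ⟨m₂, hm₂I, hm₂⟩ := hm2ex
  have hm₂Ioo : m₂ ∈ Set.Ioo z2 (z1 + 2 * π * r) :=
    ⟨lt_of_le_of_ne hm₂I.1 (fun e => by rw [← e, hρz2] at hm₂; linarith),
     lt_of_le_of_ne hm₂I.2 (fun e => by rw [e, hρz1T] at hm₂; linarith)⟩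
  -- z3 : last zero in [z2, m₂], z4 : first zero in [m₂, z1+T]
  set S₃ := Set.Icc z2 m₂ ∩ ρ ⁻¹' {0} with hS₃def
  have hS₃c : IsClosed S₃ := isClosed_Icc.inter (isClosed_singleton.preimage hcont)
  have hS₃ne : S₃.Nonempty := ⟨z2, ⟨le_refl _, hm₂Ioo.1.le⟩, hρz2⟩
  have hS₃bdd : BddAbove S₃ := ⟨m₂, fun x hx => hx.1.2⟩
  set z3 := sSup S₃ with hz3def
  have hz3 : z3 ∈ S₃ := hS₃c.csSup_mem hS₃ne hS₃bdd
  have hz3_max : ∀ t ∈ S₃, t ≤ z3 := fun t ht => le_csSup hS₃bdd ht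
  have hρz3 : ρ z3 = 0 := hz3.2
  have hz2z3 : z2 ≤ z3 := hz3.1.1
  have hz3m₂ : z3 < m₂ := lt_of_le_of_ne hz3.1.2 (fun e => by rw [e] at hρz3; linarith)
  set S₄ := Set.Icc m₂ (z1 + 2 * π * r) ∩ ρ ⁻¹' {0} with hS₄def
  have hS₄c : IsClosed S₄ := isClosed_Icc.inter (isClosed_singleton.preimage hcont)
  have hS₄ne : S₄.Nonempty := ⟨z1 + 2 * π * r, ⟨hm₂Ioo.2.le, le_refl _⟩, hρz1T⟩
  have hS₄bdd : BddBelow S₄ := ⟨m₂, fun x hx => hx.1.1⟩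
  set z4 := sInf S₄ with hz4def
  have hz4 : z4 ∈ S₄ := hS₄c.csInf_mem hS₄ne hS₄bdd
  have hz4_min : ∀ t ∈ S₄, z4 ≤ t := fun t ht => csInf_le hS₄bdd ht
  have hρz4 : ρ z4 = 0 := hz4.2
  have hm₂z4 : m₂ < z4 := lt_of_le_of_ne hz4.1.1 (fun e => by rw [← e] at hρz4; rw [hρz4] at hm₂; linarith)
  have hz4T : z4 ≤ z1 + 2 * π * r := hz4.1.2
  -- no zeros strictly between z3 and z4
  have hnz34 : ∀ t ∈ Set.Ioo z3 z4, ρ t ≠ 0 := by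
    rintro t ⟨h1, h2⟩ ht0
    rcases le_or_gt t m₂ with h | h
    · have htS : t ∈ S₃ := ⟨⟨hz2z3.trans h1.le, h⟩, ht0⟩
      exact absurd (hz3_max t htS) (not_le.2 h1)
    · have htS : t ∈ S₄ := ⟨⟨h.le, h2.le.trans hz4T⟩, ht0⟩
      exact absurd (hz4_min t htS) (not_le.2 h2)
  have hneg34 : ∀ t ∈ Set.Ioo z3 z4, ρ t < 0 := by
    have haux := pos_on_of_nz (f := fun t => -ρ t) hcont.neg (q := m₂)
      ⟨hz3m₂, hm₂z4⟩ (by simpa using hm₂) (fun t ht => by simpa using hnz34 t ht)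
    intro t ht
    have := haux t ht
    simp only [neg_pos] at this
    exact this
  have hnp34 : ∀ t ∈ Set.Icc z3 z4, ρ t ≤ 0 := by
    rintro t ⟨h1, h2⟩
    by_contra hcon
    push_neg at hcon
    have h1' : z3 < t := lt_of_le_of_ne h1 (fun e => by rw [← e, hρz3] at hcon; linarith)
    have h2' : t < z4 := lt_of_le_of_ne h2 (fun e => by rw [e, hρz4] at hcon; linarith)
    exact absurd (hneg34 t ⟨h1', h2'⟩) (not_lt.2 hcon.le)
  have hz2z4 : z2 < z4 := lt_of_le_of_lt hz2z3 (hz3m₂.trans hm₂z4)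
  have hz3T : z3 < z1 + 2 * π * r := hz3m₂.trans hm₂Ioo.2
  have hpne : ρ p ≠ 0 := ne_of_gt hp
  -- main case analysis
  rcases eq_or_lt_of_le hz2z3 with heq23 | hlt23
  · -- z2 = z3
    rcases eq_or_lt_of_le hz4T with heq4 | hlt4
    · -- z4 = z1 + T : single sign change, engine applies with (z1, z2)
      refine engine r hr ρ hcont hper h0 hc hs (A := z1) (B := z2) (x₀ := p)
        hz1z2 hz12T hnn12 ?_ ⟨hz1p, by linarith⟩ hpne
      rintro t ⟨h1, h2⟩
      exact hnp34 t ⟨by rw [← heq23]; exact h1, by rw [heq4]; exact h2⟩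
    · -- z4 < z1 + T
      by_cases hzw : ∃ w ∈ Set.Ioo z4 (z1 + 2 * π * r), ρ w = 0
      · obtain ⟨w, hwI, hw0⟩ := hzw
        exact hnot z1 z2 z4 w hz1z2 hz2z4 hwI.1 hwI.2 hρz1 hρz2 hρz4 hw0
      · push_neg at hzw
        set q := (z4 + (z1 + 2 * π * r)) / 2 with hqdef
        have hqI : q ∈ Set.Ioo z4 (z1 + 2 * π * r) := ⟨by rw [hqdef]; linarith, by rw [hqdef]; linarith⟩
        rcases lt_trichotomy (ρ q) 0 with hq | hq | hq
        · -- negative after z4 : ρ ≤ 0 on all of [z2, z1+T], engine (z1, z2)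
          have hneg4 := pos_on_of_nz (f := fun t => -ρ t) hcont.neg hqI
            (by simpa using hq) (fun t ht => by simpa using hzw t ht)
          refine engine r hr ρ hcont hper h0 hc hs (A := z1) (B := z2) (x₀ := p)
            hz1z2 hz12T hnn12 ?_ ⟨hz1p, by linarith⟩ hpne
          rintro t ⟨h1, h2⟩
          rcases le_or_gt t z4 with h | h
          · exact hnp34 t ⟨by rw [← heq23]; exact h1, h⟩
          · rcases eq_or_lt_of_le h2 with heqt | h2'
            · rw [heqt, hρz1T]
            · have := hneg4 t ⟨h, h2'⟩
              simp only [neg_pos] at this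
              exact this.le
        · exact absurd hq (hzw q hqI)
        · -- positive after z4 : engine with (z4, z2 + T)
          have hpos4 := pos_on_of_nz hcont hqI hq hzw
          have hz1z4 : z1 < z4 := by linarith
          refine engine r hr ρ hcont hper h0 hc hs (A := z4) (B := z2 + 2 * π * r)
            (x₀ := q) (by linarith) (by linarith) ?_ ?_ ⟨hqI.1, by linarith [hqI.2]⟩ (ne_of_gt hq)
          · rintro t ⟨h1, h2⟩
            rcases lt_or_ge t (z1 + 2 * π * r) with h | h
            · rcases eq_or_lt_of_le h1 with heqt | h1'
              · rw [← heqt, hρz4]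
              · exact (hpos4 t ⟨h1', h⟩).le
            · have hts : ρ t = ρ (t - 2 * π * r) := (hper.sub_eq t).symm
              rw [hts]
              exact hnn12 (t - 2 * π * r) ⟨by linarith, by linarith⟩
          · rintro t ⟨h1, h2⟩
            have hts : ρ t = ρ (t - 2 * π * r) := (hper.sub_eq t).symm
            rw [hts]
            exact hnp34 (t - 2 * π * r) ⟨by rw [← heq23]; linarith, by linarith⟩
  · -- z2 < z3
    by_cases hzw : ∃ w ∈ Set.Ioo z2 z3, ρ w = 0
    · obtain ⟨w, hwI, hw0⟩ := hzw
      exact hnot z1 z2 w z3 hz1z2 hwI.1 hwI.2 hz3T hρz1 hρz2 hw0 hρz3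
    · push_neg at hzw
      set q := (z2 + z3) / 2 with hqdef
      have hqI : q ∈ Set.Ioo z2 z3 := ⟨by rw [hqdef]; linarith, by rw [hqdef]; linarith⟩
      rcases lt_trichotomy (ρ q) 0 with hq | hq | hq
      · -- negative between z2 and z3
        have hneg23' := pos_on_of_nz (f := fun t => -ρ t) hcont.neg hqI
          (by simpa using hq) (fun t ht => by simpa using hzw t ht)
        have hneg23 : ∀ t ∈ Set.Ioo z2 z3, ρ t < 0 := by
          intro t ht
          have := hneg23' t ht
          simp only [neg_pos] at this
          exact this
        rcases eq_or_lt_of_le hz4T with heq4 | hlt4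
        · refine engine r hr ρ hcont hper h0 hc hs (A := z1) (B := z2) (x₀ := p)
            hz1z2 hz12T hnn12 ?_ ⟨hz1p, by linarith⟩ hpne
          rintro t ⟨h1, h2⟩
          rcases lt_or_ge t z3 with h | h
          · rcases eq_or_lt_of_le h1 with heqt | h1'
            · rw [← heqt, hρz2]
            · exact (hneg23 t ⟨h1', h⟩).le
          · exact hnp34 t ⟨h, by rw [heq4]; exact h2⟩
        · exact hnot z1 z2 z3 z4 hz1z2 hlt23 (hz3m₂.trans hm₂z4) hlt4 hρz1 hρz2 hρz3 hρz4
      · exact absurd hq (hzw q hqI)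
      · -- positive between z2 and z3
        have hpos23 := pos_on_of_nz hcont hqI hq hzw
        rcases eq_or_lt_of_le hz4T with heq4 | hlt4
        · refine engine r hr ρ hcont hper h0 hc hs (A := z1) (B := z3) (x₀ := p)
            (by linarith) (by linarith) ?_ ?_ ⟨hz1p, by linarith⟩ hpne
          · rintro t ⟨h1, h2⟩
            rcases le_or_gt t z2 with h | h
            · exact hnn12 t ⟨h1, h⟩
            · rcases eq_or_lt_of_le h2 with heqt | h2'
              · rw [heqt, hρz3]
              · exact (hpos23 t ⟨h, h2'⟩).le
          · rintro t ⟨h1, h2⟩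
            exact hnp34 t ⟨h1, by rw [heq4]; exact h2⟩
        · exact hnot z1 z2 z3 z4 hz1z2 hlt23 (hz3m₂.trans hm₂z4) hlt4 hρz1 hρz2 hρz3 hρz4

lemma distinct_mod {T zi zj : ℝ} (hT : 0 < T) (hij : zi < zj) (hlt : zj < zi + T)
    {ni nj : ℤ} (h : zi + ni • T = zj + nj • T) : False := by
  rw [zsmul_eq_mul, zsmul_eq_mul] at h
  have hk1 : (0:ℝ) < ((ni - nj : ℤ) : ℝ) * T := by push_cast; nlinarith
  have hk2 : ((ni - nj : ℤ) : ℝ) * T < T := by push_cast; nlinarith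
  have hkpos : 0 < ((ni - nj : ℤ) : ℝ) := by
    by_contra hcc; push_neg at hcc; nlinarith
  have hz : (0:ℤ) < ni - nj := by exact_mod_cast hkpos
  have h1 : (1:ℝ) ≤ ((ni - nj : ℤ) : ℝ) := by exact_mod_cast hz
  nlinarith

/-- A nonzero continuous `2πr`-periodic function whose Fourier expansion has no constant
term and no first harmonics has at least four zeros in `[0, 2πr)`. -/
theorem stmt_14 (r : ℝ) (hr : 0 < r) (hr1 : r < 1) (ρ : ℝ → ℝ)
    (hcont : Continuous ρ) (hper : Function.Periodic ρ (2 * π * r))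
    (h0 : ∫ t in (0:ℝ)..(2 * π * r), ρ t = 0)
    (hc : ∫ t in (0:ℝ)..(2 * π * r), ρ t * cos (t / r) = 0)
    (hs : ∫ t in (0:ℝ)..(2 * π * r), ρ t * sin (t / r) = 0)
    (hne : ∃ t, ρ t ≠ 0) :
    ∃ a b c d : ℝ, a ∈ Set.Ico 0 (2 * π * r) ∧ b ∈ Set.Ico 0 (2 * π * r) ∧
      c ∈ Set.Ico 0 (2 * π * r) ∧ d ∈ Set.Ico 0 (2 * π * r) ∧
      a ≠ b ∧ a ≠ c ∧ a ≠ d ∧ b ≠ c ∧ b ≠ d ∧ c ≠ d ∧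
      ρ a = 0 ∧ ρ b = 0 ∧ ρ c = 0 ∧ ρ d = 0 := by
  by_contra hcon
  have hT : 0 < 2 * π * r := by positivity
  have hred : ∀ x : ℝ, ∃ y ∈ Set.Ico 0 (2 * π * r), ρ y = ρ x ∧ ∃ n : ℤ, y = x + n • (2 * π * r) := by
    intro x
    obtain ⟨n, hn, -⟩ := existsUnique_add_zsmul_mem_Ico hT x 0
    rw [zero_add] at hn
    exact ⟨x + n • (2 * π * r), hn, hper.zsmul n x, n, rfl⟩
  have hnot : ∀ z1 z2 z3 z4 : ℝ, z1 < z2 → z2 < z3 → z3 < z4 → z4 < z1 + 2 * π * r →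
      ρ z1 = 0 → ρ z2 = 0 → ρ z3 = 0 → ρ z4 = 0 → False := by
    intro z1 z2 z3 z4 h12 h23 h34 h4T e1 e2 e3 e4
    obtain ⟨y1, hy1, f1, n1, g1⟩ := hred z1
    obtain ⟨y2, hy2, f2, n2, g2⟩ := hred z2
    obtain ⟨y3, hy3, f3, n3, g3⟩ := hred z3
    obtain ⟨y4, hy4, f4, n4, g4⟩ := hred z4
    refine hcon ⟨y1, y2, y3, y4, hy1, hy2, hy3, hy4, ?_, ?_, ?_, ?_, ?_, ?_,
      f1.trans e1, f2.trans e2, f3.trans e3, f4.trans e4⟩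
    · intro e; rw [g1, g2] at e; exact distinct_mod hT h12 (by linarith) e
    · intro e; rw [g1, g3] at e; exact distinct_mod hT (h12.trans h23) (by linarith) e
    · intro e; rw [g1, g4] at e; exact distinct_mod hT (h12.trans (h23.trans h34)) (by linarith) e
    · intro e; rw [g2, g3] at e; exact distinct_mod hT h23 (by linarith) e
    · intro e; rw [g2, g4] at e; exact distinct_mod hT (h23.trans h34) (by linarith) e
    · intro e; rw [g3, g4] at e; exact distinct_mod hT h34 (by linarith) e
  obtain ⟨t₀, ht₀⟩ := hne
  rcases lt_or_gt_of_ne ht₀ with hlt | hgt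
  · refine key r hr (fun t => -ρ t) hcont.neg (fun x => by simp [hper x]) ?_ ?_ ?_ t₀
      (by simpa using hlt) ?_
    · rw [intervalIntegral.integral_neg, h0, neg_zero]
    · simp only [neg_mul]
      rw [intervalIntegral.integral_neg, hc, neg_zero]
    · simp only [neg_mul]
      rw [intervalIntegral.integral_neg, hs, neg_zero]
    · intro z1 z2 z3 z4 a b c d e1 e2 e3 e4
      exact hnot z1 z2 z3 z4 a b c d (neg_eq_zero.mp e1) (neg_eq_zero.mp e2)
        (neg_eq_zero.mp e3) (neg_eq_zero.mp e4)
  · exact key r hr ρ hcont hper h0 hc hs t₀ hgt hnot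
end

section
/- For integer k ≥ 2 and 0 < r < 1, the curve Γ(t) = ( r(sin((k-1)t)/(k-1) + sin((k+1)t)/(k+1)), r(cos((k-1)t)/(k-1) - cos((k+1)t)/(k+1)), 2√(1-r²) sin(kt)/k ) lies on the hyperboloid ((k²-1)/(4r²))(x² + y²) - (k²/(4(1-r²))) z² = 1/(k²-1), and satisfies |z(t)| ≤ 2√(1-r²)/k for all t. -/
open Real

/-- The spacial hypocycloid with parameters `k ≥ 2`, `0 < r < 1` lies on the hyperboloid
`((k²-1)/(4r²))(x² + y²) - (k²/(4(1-r²))) z² = 1/(k²-1)` and between the planes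
`z = ± 2√(1-r²)/k`. -/
theorem stmt_16 (k : ℕ) (hk : 2 ≤ k) (r : ℝ) (hr : 0 < r) (hr1 : r < 1) (t : ℝ) :
    (((k:ℝ) ^ 2 - 1) / (4 * r ^ 2)) *
        ((r * (sin (((k:ℝ) - 1) * t) / ((k:ℝ) - 1) + sin (((k:ℝ) + 1) * t) / ((k:ℝ) + 1))) ^ 2
          + (r * (cos (((k:ℝ) - 1) * t) / ((k:ℝ) - 1) - cos (((k:ℝ) + 1) * t) / ((k:ℝ) + 1))) ^ 2)
      - ((k:ℝ) ^ 2 / (4 * (1 - r ^ 2))) * (2 * Real.sqrt (1 - r ^ 2) * sin ((k:ℝ) * t) / (k:ℝ)) ^ 2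
      = 1 / ((k:ℝ) ^ 2 - 1) ∧
    |2 * Real.sqrt (1 - r ^ 2) * sin ((k:ℝ) * t) / (k:ℝ)| ≤ 2 * Real.sqrt (1 - r ^ 2) / (k:ℝ) := by
  have hk2 : (2:ℝ) ≤ (k:ℝ) := by exact_mod_cast hk
  have hK0 : (k:ℝ) ≠ 0 := by nlinarith
  have h1 : (k:ℝ) - 1 ≠ 0 := by nlinarith
  have h2 : (k:ℝ) + 1 ≠ 0 := by nlinarith
  have h3 : (k:ℝ)^2 - 1 ≠ 0 := by nlinarith
  have hr2 : (0:ℝ) < 1 - r^2 := by nlinarith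
  have hs : Real.sqrt (1 - r^2) ^ 2 = 1 - r^2 := Real.sq_sqrt hr2.le
  constructor
  · have e1 : ((k:ℝ) - 1) * t = (k:ℝ) * t - t := by ring
    have e2 : ((k:ℝ) + 1) * t = (k:ℝ) * t + t := by ring
    rw [e1, e2, Real.sin_sub, Real.sin_add, Real.cos_sub, Real.cos_add]
    have p1 := Real.sin_sq_add_cos_sq ((k:ℝ) * t)
    have p2 := Real.sin_sq_add_cos_sq t
    field_simp
    linear_combination (4*((k:ℝ)^2-1)^2*(1-r^2)) * p1
      + (4*((k:ℝ)^2-1)^2*(1-r^2)*((k:ℝ)^2*sin ((k:ℝ)*t)^2 + cos ((k:ℝ)*t)^2)) * p2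
      - (4*((k:ℝ)^2-1)^2*((k:ℝ)^2-1)*sin ((k:ℝ)*t)^2) * hs
  · rw [abs_div, abs_of_pos (by positivity : (0:ℝ) < (k:ℝ)), abs_mul,
      abs_of_nonneg (by positivity : (0:ℝ) ≤ 2 * Real.sqrt (1 - r^2))]
    have he : 2 * Real.sqrt (1 - r^2) / (k:ℝ) = 2 * Real.sqrt (1 - r^2) * 1 / (k:ℝ) := by ring
    rw [he]
    gcongr
    exact abs_sin_le_one _
end
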